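/- Let ã, r̃, p̃ be real numbers with 0 < ã < 1, r̃ > 1, and 0 < p̃ ≤ ã/r̃. Define ε(q) = log( 2p̃(1−q) / ( √((1−p̃)² + 4p̃²·q(1−q)·(1/ã − 1)) − (1−p̃) ) ) for q ∈ (0,1), and ε(1) = log( ã(1−p̃) / ( p̃(1−ã) ) ). Then for every q ∈ (0,1], ε(q) ≥ log( ã(1−p̃) / ( p̃(1−ã) ) ); that is, the minimum of ε over (0,1] equals log( ã(1−p̃)/( p̃(1−ã) ) ) and is attained at q = 1. -/
import Mathlib


/-- The privacy-budget threshold `ε_i(p̃, q)` under the risk profile `r*(p̃,q) = ã/(p̃·q)`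
(which applies when `0 < p̃ ≤ ã/r̃`), with the `q = 1` branch given by its closed form. -/
noncomputable def epsThreshold14 (a p q : ℝ) : ℝ :=
  if q < 1 then
    Real.log (2 * p * (1 - q) /
      (Real.sqrt ((1 - p) ^ 2 + 4 * p ^ 2 * q * (1 - q) * (1 / a - 1)) - (1 - p)))
  else
    Real.log (a * (1 - p) / (p * (1 - a)))

theorem stmt_14 (a r p : ℝ) (ha0 : 0 < a) (ha1 : a < 1) (hr : 1 < r)
    (hp0 : 0 < p) (hp : p ≤ a / r) :
    (∀ q : ℝ, 0 < q → q ≤ 1 →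
      Real.log (a * (1 - p) / (p * (1 - a))) ≤ epsThreshold14 a p q) ∧
    epsThreshold14 a p 1 = Real.log (a * (1 - p) / (p * (1 - a))) := by
  have hpa : p < a := lt_of_le_of_lt hp (by
    rw [div_lt_iff₀ (lt_trans one_pos hr)]
    nlinarith)
  have hp1 : p < 1 := hpa.trans ha1
  have h1p : (0:ℝ) < 1 - p := by linarith
  have h1a : (0:ℝ) < 1 - a := by linarith
  have hc : (0:ℝ) < 1 / a - 1 := by
    rw [lt_sub_iff_add_lt, zero_add, lt_div_iff₀ ha0]; linarith
  have hL : (0:ℝ) < a * (1 - p) / (p * (1 - a)) := by positivity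
  constructor
  · intro q hq0 hq1
    unfold epsThreshold14
    rcases lt_or_ge q 1 with hq | hq
    · rw [if_pos hq]
      have hq1' : (0:ℝ) < 1 - q := by linarith
      set D := (1 - p) ^ 2 + 4 * p ^ 2 * q * (1 - q) * (1 / a - 1) with hD
      set S := Real.sqrt D with hSdef
      have hDpos : (1 - p) ^ 2 < D := by
        rw [hD]
        have : 0 < 4 * p ^ 2 * q * (1 - q) * (1 / a - 1) := by positivity
        linarith
      have hSgt : 1 - p < S := by
        have : Real.sqrt ((1 - p) ^ 2) < Real.sqrt D :=
          Real.sqrt_lt_sqrt (by positivity) hDpos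
        rwa [Real.sqrt_sq h1p.le] at this
      have hden : (0:ℝ) < S - (1 - p) := by linarith
      -- upper bound on S
      set t := 2 * p ^ 2 * (1 - q) * (1 - a) / (a * (1 - p)) with ht
      have ht0 : 0 < t := by positivity
      have hSle : S ≤ (1 - p) + t := by
        have hDle : D ≤ ((1 - p) + t) ^ 2 := by
          have h2 : 2 * (1 - p) * t = 4 * p ^ 2 * (1 - q) * (1 - a) / a := by
            rw [ht]; field_simp; ring
          have hca : 1 / a - 1 = (1 - a) / a := by field_simp
          have hkey : 4 * p ^ 2 * q * (1 - q) * ((1 - a) / a)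
              ≤ 4 * p ^ 2 * (1 - q) * (1 - a) / a := by
            have hq' : q * (1 - q) ≤ 1 - q := by nlinarith
            calc 4 * p ^ 2 * q * (1 - q) * ((1 - a) / a)
                = (q * (1 - q)) * (4 * p ^ 2 * (1 - a) / a) := by ring
              _ ≤ (1 - q) * (4 * p ^ 2 * (1 - a) / a) := by
                  apply mul_le_mul_of_nonneg_right hq'; positivity
              _ = 4 * p ^ 2 * (1 - q) * (1 - a) / a := by ring
          have ht2 : 0 ≤ t ^ 2 := sq_nonneg t
          calc D = (1 - p) ^ 2 + 4 * p ^ 2 * q * (1 - q) * ((1 - a) / a) := by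
                rw [hD, hca]
            _ ≤ (1 - p) ^ 2 + 2 * (1 - p) * t + t ^ 2 := by
                rw [h2]; linarith
            _ = ((1 - p) + t) ^ 2 := by ring
        calc S = Real.sqrt D := rfl
          _ ≤ Real.sqrt (((1 - p) + t) ^ 2) := Real.sqrt_le_sqrt hDle
          _ = (1 - p) + t := Real.sqrt_sq (by linarith)
      have hfrac : a * (1 - p) / (p * (1 - a)) ≤
          2 * p * (1 - q) / (S - (1 - p)) := by
        rw [div_le_div_iff₀ (by positivity) hden]
        have hat : a * (1 - p) * t = 2 * p ^ 2 * (1 - q) * (1 - a) := by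
          rw [ht]; field_simp
        nlinarith [mul_le_mul_of_nonneg_left hSle (by positivity : (0:ℝ) ≤ a * (1 - p))]
      exact Real.log_le_log hL hfrac
    · rw [if_neg (not_lt.mpr hq)]
  · unfold epsThreshold14
    rw [if_neg (lt_irrefl 1)]
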